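/- Assume Ω ≠ 0 and 9Ω² - 4σ = 0, and set h := (3Ω/2)·u + z. Then: B(h,h) = 0; W(h) = -(Ω/2)·h; (W + (Ω/2)·id) ∘ (W + (Ω/2)·id) ∘ (W - Ω·id) = 0; and (W + (Ω/2)·id) ∘ (W - Ω·id) ≠ 0. Hence W has the double eigenvalue -Ω/2 with the null vector h = (3Ω/2)𝒰 + 𝒵 as eigenvector and the simple eigenvalue Ω, with minimal polynomial (X + Ω/2)²(X - Ω). (The algebraic content of the second case of Proposition 5 of the paper: Petrov–Bel type II with (3Ω/2)𝒰 + 𝒵 the canonical null SD bivector.) -/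
import Mathlib


open Module LinearMap

noncomputable section

/-- The endomorphism `W(x) := 3Ω·B(u,x)·u + Ω·x + B(u,x)·z + B(z,x)·u` of `V`,
representing the self-dual Weyl tensor `𝒲 = 3Ω·𝒰⊗𝒰 + Ω·𝒢 + 𝒰⊗̃𝒵` of a space-time
admitting a 2+2 umbilical structure acting on self-dual bivectors. -/
def Wmap {V : Type*} [AddCommGroup V] [Module ℂ V]
    (B : LinearMap.BilinForm ℂ V) (Ω : ℂ) (u z : V) : V →ₗ[ℂ] V :=
  (3 * Ω) • (B u).smulRight u + Ω • LinearMap.id + (B u).smulRight z + (B z).smulRight u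

end

/-- Proposition 5, second type II case: if `Ω ≠ 0` and `9Ω² - 4σ = 0`,
then `h := (3Ω/2)u + z` satisfies `B(h,h) = 0`, `W(h) = -(Ω/2)·h`,
`(W + (Ω/2)·id)∘(W + (Ω/2)·id)∘(W - Ω·id) = 0` and `(W + (Ω/2)·id)∘(W - Ω·id) ≠ 0`. -/
theorem typeII_second_case
    {V : Type*} [AddCommGroup V] [Module ℂ V] [FiniteDimensional ℂ V]
    (hdim : finrank ℂ V = 3)
    (B : LinearMap.BilinForm ℂ V) (hBsym : ∀ x y, B x y = B y x)
    (hBnd : B.Nondegenerate)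
    (Ω : ℂ) (u z : V) (hu : B u u = -1) (huz : B u z = 0)
    (hΩ : Ω ≠ 0) (hσ : 9 * Ω ^ 2 - 4 * B z z = 0) :
    B ((3 * Ω / 2) • u + z) ((3 * Ω / 2) • u + z) = 0 ∧
    Wmap B Ω u z ((3 * Ω / 2) • u + z) = (-(Ω / 2)) • ((3 * Ω / 2) • u + z) ∧
    (Wmap B Ω u z + (Ω / 2) • LinearMap.id) ∘ₗ (Wmap B Ω u z + (Ω / 2) • LinearMap.id)
        ∘ₗ (Wmap B Ω u z - Ω • LinearMap.id) = 0 ∧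
    (Wmap B Ω u z + (Ω / 2) • LinearMap.id) ∘ₗ (Wmap B Ω u z - Ω • LinearMap.id) ≠ 0 := by

  have hzu : B z u = 0 := (hBsym z u).trans huz
  have hzz : B z z = 9 * Ω ^ 2 / 4 := by linear_combination -hσ / 4
  have hW : ∀ x, Wmap B Ω u z x
      = (3 * Ω) • (B u x) • u + Ω • x + (B u x) • z + (B z x) • u := fun x => by
    simp [Wmap]
  refine ⟨?_, ?_, ?_, ?_⟩
  · simp only [map_add, map_smul, LinearMap.add_apply, LinearMap.smul_apply,
      hu, huz, hzu, hzz, smul_eq_mul]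
    ring
  · simp only [hW, map_add, map_smul, hu, huz, hzu, hzz, smul_eq_mul]
    module
  · ext x
    simp only [LinearMap.comp_apply, LinearMap.add_apply, LinearMap.sub_apply,
      LinearMap.smul_apply, LinearMap.id_apply, LinearMap.zero_apply,
      hW, map_add, map_smul, map_sub, hu, huz, hzu, hzz, smul_eq_mul]
    module
  · intro hc
    have h0 := LinearMap.congr_fun hc u
    simp only [LinearMap.comp_apply, LinearMap.add_apply, LinearMap.sub_apply,
      LinearMap.smul_apply, LinearMap.id_apply, LinearMap.zero_apply,
      hW, map_add, map_smul, map_sub, hu, huz, hzu, hzz, smul_eq_mul] at h0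
    have h1 := congrArg (B u) h0
    simp only [map_add, map_smul, map_sub, map_zero, hu, huz, hzu, hzz,
      smul_eq_mul] at h1
    have : Ω ^ 2 = 0 := by linear_combination h1 * (-4/9 : ℂ)
    exact hΩ ((pow_eq_zero_iff (two_ne_zero)).mp this)
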